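/- Let p ≥ 1 and let G₁ and G₂ be symmetric positive definite p×p real matrices. Then the variance function v(λ) = trace((G₂ + λG₁)⁻²G₂) is strictly decreasing on [0, ∞): for all 0 ≤ λ₁ < λ₂ one has trace((G₂ + λ₂G₁)⁻²G₂) < trace((G₂ + λ₁G₁)⁻²G₂). -/

import Mathlib

open Matrix

variable {n : Type*} [Fintype n] [DecidableEq n]

lemma myPosDef_conj {B M : Matrix n n ℝ} (hB : B.PosDef) (hM : IsUnit M.det) :
    (Mᵀ * B * M).PosDef := by
  have hBt : Bᵀ = B := by
    exact (by simpa [Matrix.conjTranspose_eq_transpose_of_trivial] using hB.1 : B.IsSymm).eq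
  refine Matrix.posDef_iff_dotProduct_mulVec.mpr ⟨?_, ?_⟩
  · show (Mᵀ * B * M)ᴴ = _
    simp [Matrix.conjTranspose_eq_transpose_of_trivial, Matrix.transpose_mul, hBt,
      Matrix.mul_assoc]
  · intro x hx
    have hMx : M *ᵥ x ≠ 0 := by
      intro h
      apply hx
      have h2 := congrArg (fun v => M⁻¹ *ᵥ v) h
      simpa [Matrix.mulVec_mulVec, Matrix.nonsing_inv_mul M hM] using h2
    have h3 := hB.dotProduct_mulVec_pos hMx
    have : star x ⬝ᵥ ((Mᵀ * B * M) *ᵥ x) = star (M *ᵥ x) ⬝ᵥ (B *ᵥ (M *ᵥ x)) := by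
      simp only [star_trivial, ← Matrix.mulVec_mulVec]
      rw [Matrix.dotProduct_mulVec, Matrix.vecMul_transpose]
    rw [this]
    exact h3

lemma myPosDef_smul {A : Matrix n n ℝ} {c : ℝ} (hc : 0 < c) (hA : A.PosDef) :
    (c • A).PosDef := by
  refine Matrix.posDef_iff_dotProduct_mulVec.mpr ⟨?_, ?_⟩
  · show (c • A)ᴴ = _
    rw [Matrix.conjTranspose_smul, hA.1, star_trivial]
  · intro x hx
    have h := hA.dotProduct_mulVec_pos hx
    simp only [Matrix.smul_mulVec, dotProduct_smul, smul_eq_mul]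
    exact mul_pos hc h

lemma myPosSemidef_smul {A : Matrix n n ℝ} {c : ℝ} (hc : 0 ≤ c) (hA : A.PosSemidef) :
    (c • A).PosSemidef := by
  refine Matrix.posSemidef_iff_dotProduct_mulVec.mpr ⟨?_, ?_⟩
  · show (c • A)ᴴ = _
    rw [Matrix.conjTranspose_smul, hA.1, star_trivial]
  · intro x
    have h := hA.dotProduct_mulVec_nonneg x
    simp only [Matrix.smul_mulVec, dotProduct_smul, smul_eq_mul]
    exact mul_nonneg hc h

lemma myTrace_pos [Nonempty n] {A : Matrix n n ℝ} (hA : A.PosDef) : 0 < A.trace := by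
  rw [Matrix.trace]
  apply Finset.sum_pos _ Finset.univ_nonempty
  intro i _
  have h := hA.dotProduct_mulVec_pos (x := Pi.single i 1) (by
    intro h
    have h1 := congrFun h i
    rw [Pi.single_eq_same] at h1
    exact one_ne_zero h1)
  simpa [Matrix.mulVec_single, single_dotProduct, Matrix.diag] using h

lemma myTrace_mul_pos [Nonempty n] {D K : Matrix n n ℝ} (hD : D.PosDef) (hK : K.PosDef) :
    0 < (D * K).trace := by
  obtain ⟨L, hLps, hLL⟩ : ∃ L : Matrix n n ℝ, L.PosSemidef ∧ L * L = K :=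
    by open scoped MatrixOrder in exact ⟨CFC.sqrt K, (CFC.sqrt_nonneg K).posSemidef, CFC.sqrt_mul_sqrt_self K hK.posSemidef.nonneg⟩
  have hLt : Lᵀ = L := by
    exact (by simpa [Matrix.conjTranspose_eq_transpose_of_trivial] using hLps.1 : L.IsSymm).eq
  have hLdet : IsUnit L.det := by
    have : L.det * L.det = K.det := by rw [← Matrix.det_mul, hLL]
    have hKd := hK.det_pos
    refine isUnit_iff_ne_zero.mpr fun h => ?_
    rw [h, mul_zero] at this
    exact hKd.ne' this.symm
  have h1 : (D * K).trace = (Lᵀ * D * L).trace := by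
    rw [hLt, ← hLL, ← Matrix.mul_assoc, Matrix.trace_mul_cycle]
  rw [h1]
  exact myTrace_pos (myPosDef_conj hD hLdet)

theorem variance_term_strictAnti
    (p : ℕ) (hp : 1 ≤ p) (G₁ G₂ : Matrix (Fin p) (Fin p) ℝ)
    (hG₁ : G₁.PosDef) (hG₂ : G₂.PosDef) :
    ∀ l₁ l₂ : ℝ, 0 ≤ l₁ → l₁ < l₂ →
      Matrix.trace (((G₂ + l₂ • G₁)⁻¹)ᵀ * (G₂ + l₂ • G₁)⁻¹ * G₂)
        < Matrix.trace (((G₂ + l₁ • G₁)⁻¹)ᵀ * (G₂ + l₁ • G₁)⁻¹ * G₂) := by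
  intro l₁ l₂ hl₁ hlt
  have hl₂ : 0 ≤ l₂ := hl₁.trans hlt.le
  haveI : Nonempty (Fin p) := ⟨⟨0, hp⟩⟩
  have hG₁t : G₁ᵀ = G₁ := by
    exact (by simpa [Matrix.conjTranspose_eq_transpose_of_trivial] using hG₁.1 : G₁.IsSymm).eq
  have hG₂t : G₂ᵀ = G₂ := by
    exact (by simpa [Matrix.conjTranspose_eq_transpose_of_trivial] using hG₂.1 : G₂.IsSymm).eq
  obtain ⟨R, hRps, hRR⟩ : ∃ R : Matrix (Fin p) (Fin p) ℝ, R.PosSemidef ∧ R * R = G₂ :=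
    by open scoped MatrixOrder in exact ⟨CFC.sqrt G₂, (CFC.sqrt_nonneg G₂).posSemidef, CFC.sqrt_mul_sqrt_self G₂ hG₂.posSemidef.nonneg⟩
  have hRt : Rᵀ = R := by
    exact (by simpa [Matrix.conjTranspose_eq_transpose_of_trivial] using hRps.1 : R.IsSymm).eq
  have hRdet : IsUnit R.det := by
    have h : R.det * R.det = G₂.det := by rw [← Matrix.det_mul, hRR]
    refine isUnit_iff_ne_zero.mpr fun h0 => ?_
    rw [h0, mul_zero] at h
    exact hG₂.det_pos.ne' h.symm
  haveI := R.invertibleOfIsUnitDet hRdet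
  have hRit : (R⁻¹)ᵀ = R⁻¹ := by rw [Matrix.transpose_nonsing_inv, hRt]
  have hRidet : IsUnit (R⁻¹).det := isUnit_nonsing_inv_det R hRdet
  set H := R⁻¹ * G₁ * R⁻¹ with hHdef
  have hH : H.PosDef := by
    have h := myPosDef_conj hG₁ hRidet
    rwa [hRit] at h
  have hHt : Hᵀ = H := by
    exact (by simpa [Matrix.conjTranspose_eq_transpose_of_trivial] using hH.1 : H.IsSymm).eq
  have hHdet : IsUnit H.det := isUnit_iff_ne_zero.mpr hH.det_pos.ne'
  have hT : ∀ l : ℝ, 0 ≤ l → ((1 : Matrix (Fin p) (Fin p) ℝ) + l • H).PosDef := fun l hl =>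
    Matrix.PosDef.add_posSemidef Matrix.PosDef.one (myPosSemidef_smul hl hH.posSemidef)
  have hG2inv : G₂⁻¹ = R⁻¹ * R⁻¹ := by rw [← hRR, Matrix.mul_inv_rev]
  have hRHR : R * H * R = G₁ := by
    rw [hHdef]
    simp only [Matrix.mul_assoc, Matrix.mul_inv_cancel_left_of_invertible,
      Matrix.inv_mul_of_invertible, Matrix.mul_one]
  have hS : ∀ l : ℝ, G₂ + l • G₁ = R * ((1 : Matrix (Fin p) (Fin p) ℝ) + l • H) * R := by
    intro l
    rw [Matrix.mul_add, Matrix.mul_one, Matrix.add_mul, hRR, Matrix.mul_smul,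
      Matrix.smul_mul, hRHR]
  have hSinv : ∀ T : Matrix (Fin p) (Fin p) ℝ, (R * T * R)⁻¹ = R⁻¹ * T⁻¹ * R⁻¹ := by
    intro T
    rw [Matrix.mul_inv_rev, Matrix.mul_inv_rev, Matrix.mul_assoc]
  -- the trace reduction
  have hv : ∀ l : ℝ, 0 ≤ l →
      Matrix.trace (((G₂ + l • G₁)⁻¹)ᵀ * (G₂ + l • G₁)⁻¹ * G₂)
        = Matrix.trace (((1 : Matrix (Fin p) (Fin p) ℝ) + l • H)⁻¹
            * ((1 : Matrix (Fin p) (Fin p) ℝ) + l • H)⁻¹ * G₂⁻¹) := by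
    intro l hl
    have hTl := hT l hl
    haveI := ((1 : Matrix (Fin p) (Fin p) ℝ) + l • H).invertibleOfIsUnitDet
      (isUnit_iff_ne_zero.mpr hTl.det_pos.ne')
    set T := (1 : Matrix (Fin p) (Fin p) ℝ) + l • H with hTdef
    have hSt : ((G₂ + l • G₁)⁻¹)ᵀ = (G₂ + l • G₁)⁻¹ := by
      rw [Matrix.transpose_nonsing_inv]
      congr 1
      rw [Matrix.transpose_add, Matrix.transpose_smul, hG₁t, hG₂t]
    rw [hSt, hS l, hSinv]
    have key : R⁻¹ * T⁻¹ * R⁻¹ * (R⁻¹ * T⁻¹ * R⁻¹) * G₂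
        = R⁻¹ * (T⁻¹ * G₂⁻¹ * T⁻¹) * R := by
      rw [hG2inv, ← hRR]
      simp only [Matrix.mul_assoc, Matrix.inv_mul_cancel_left_of_invertible]
    calc Matrix.trace (R⁻¹ * T⁻¹ * R⁻¹ * (R⁻¹ * T⁻¹ * R⁻¹) * G₂)
        = Matrix.trace (R⁻¹ * (T⁻¹ * G₂⁻¹ * T⁻¹) * R) := by rw [key]
      _ = Matrix.trace (R * R⁻¹ * (T⁻¹ * G₂⁻¹ * T⁻¹)) := Matrix.trace_mul_cycle _ _ _
      _ = Matrix.trace (T⁻¹ * G₂⁻¹ * T⁻¹) := by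
          rw [Matrix.mul_inv_of_invertible, Matrix.one_mul]
      _ = Matrix.trace (T⁻¹ * T⁻¹ * G₂⁻¹) := Matrix.trace_mul_cycle _ _ _
  -- now the two dial values
  set T₁ := (1 : Matrix (Fin p) (Fin p) ℝ) + l₁ • H with hT₁def
  set T₂ := (1 : Matrix (Fin p) (Fin p) ℝ) + l₂ • H with hT₂def
  have hT₁ : T₁.PosDef := hT l₁ hl₁
  have hT₂ : T₂.PosDef := hT l₂ hl₂
  haveI := T₁.invertibleOfIsUnitDet (isUnit_iff_ne_zero.mpr hT₁.det_pos.ne')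
  haveI := T₂.invertibleOfIsUnitDet (isUnit_iff_ne_zero.mpr hT₂.det_pos.ne')
  have hT₁t : T₁ᵀ = T₁ := by
    exact (by simpa [Matrix.conjTranspose_eq_transpose_of_trivial] using hT₁.1 : T₁.IsSymm).eq
  have hT₂t : T₂ᵀ = T₂ := by
    exact (by simpa [Matrix.conjTranspose_eq_transpose_of_trivial] using hT₂.1 : T₂.IsSymm).eq
  have hcomm : T₁ * T₂ = T₂ * T₁ := by
    rw [hT₁def, hT₂def]
    simp only [Matrix.mul_add, Matrix.add_mul, Matrix.mul_one, Matrix.one_mul,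
      Matrix.mul_smul, Matrix.smul_mul, smul_smul]
    module
  have hc21 : T₂⁻¹ * T₁ = T₁ * T₂⁻¹ := by
    calc T₂⁻¹ * T₁ = T₂⁻¹ * T₁ * (T₂ * T₂⁻¹) := by
          rw [Matrix.mul_inv_of_invertible, Matrix.mul_one]
      _ = T₂⁻¹ * (T₁ * T₂) * T₂⁻¹ := by simp only [Matrix.mul_assoc]
      _ = T₂⁻¹ * (T₂ * T₁) * T₂⁻¹ := by rw [hcomm]
      _ = T₁ * T₂⁻¹ := by rw [Matrix.inv_mul_cancel_left_of_invertible]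
  have hcinv : T₂⁻¹ * T₁⁻¹ = T₁⁻¹ * T₂⁻¹ := by
    rw [← Matrix.mul_inv_rev, ← Matrix.mul_inv_rev, hcomm]
  have hMidentity : T₁⁻¹ * T₂⁻¹ * (T₂ * T₂ - T₁ * T₁) * (T₂⁻¹ * T₁⁻¹)
      = T₁⁻¹ * T₁⁻¹ - T₂⁻¹ * T₂⁻¹ := by
    rw [Matrix.mul_sub, Matrix.sub_mul]
    congr 1
    · simp only [Matrix.mul_assoc, Matrix.inv_mul_cancel_left_of_invertible,
        Matrix.mul_inv_cancel_left_of_invertible]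
    · calc T₁⁻¹ * T₂⁻¹ * (T₁ * T₁) * (T₂⁻¹ * T₁⁻¹)
          = T₁⁻¹ * (T₂⁻¹ * T₁) * ((T₁ * T₂⁻¹) * T₁⁻¹) := by simp only [Matrix.mul_assoc]
        _ = T₁⁻¹ * (T₁ * T₂⁻¹) * ((T₁ * T₂⁻¹) * T₁⁻¹) := by rw [hc21]
        _ = T₂⁻¹ * (T₁ * (T₂⁻¹ * T₁⁻¹)) := by
            simp only [Matrix.mul_assoc, Matrix.inv_mul_cancel_left_of_invertible]
        _ = T₂⁻¹ * (T₁ * (T₁⁻¹ * T₂⁻¹)) := by rw [hcinv]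
        _ = T₂⁻¹ * T₂⁻¹ := by rw [Matrix.mul_inv_cancel_left_of_invertible]
  have hHH : (H * H).PosDef := by
    have h := myPosDef_conj (M := H) Matrix.PosDef.one hHdet
    rwa [Matrix.mul_one, hHt] at h
  have hC : (T₂ * T₂ - T₁ * T₁).PosDef := by
    have heq : T₂ * T₂ - T₁ * T₁
        = (l₂ * l₂ - l₁ * l₁) • (H * H) + (2 * l₂ - 2 * l₁) • H := by
      rw [hT₁def, hT₂def]
      simp only [Matrix.mul_add, Matrix.add_mul, Matrix.mul_one, Matrix.one_mul,
        Matrix.mul_smul, Matrix.smul_mul, smul_smul]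
      module
    rw [heq]
    exact (myPosDef_smul (by nlinarith) hHH).add (myPosDef_smul (by linarith) hH)
  have hMdet : IsUnit (T₂⁻¹ * T₁⁻¹).det := by
    rw [Matrix.det_mul]
    exact (isUnit_nonsing_inv_det T₂ (isUnit_iff_ne_zero.mpr hT₂.det_pos.ne')).mul
      (isUnit_nonsing_inv_det T₁ (isUnit_iff_ne_zero.mpr hT₁.det_pos.ne'))
  have hMt : (T₂⁻¹ * T₁⁻¹)ᵀ = T₁⁻¹ * T₂⁻¹ := by
    rw [Matrix.transpose_mul, Matrix.transpose_nonsing_inv, Matrix.transpose_nonsing_inv,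
      hT₁t, hT₂t]
  have hD : (T₁⁻¹ * T₁⁻¹ - T₂⁻¹ * T₂⁻¹).PosDef := by
    have h := myPosDef_conj hC hMdet
    rwa [hMt, hMidentity] at h
  have hfinal : 0 < Matrix.trace ((T₁⁻¹ * T₁⁻¹ - T₂⁻¹ * T₂⁻¹) * G₂⁻¹) :=
    myTrace_mul_pos hD hG₂.inv
  rw [Matrix.sub_mul, Matrix.trace_sub] at hfinal
  rw [hv l₁ hl₁, hv l₂ hl₂]
  linarith
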